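/- Let G ∈ ℝ^{p×q} have full row rank, Y_d ∈ ℝ^p, and let F ∈ ℝ^{q×p} satisfy ρ(I_p − G·F) < 1 (so G·F is invertible). Then the iteration U_{k+1} = (I_q − F·G)·U_k + F·Y_d with initial vector U_0 converges to U_∞ = [I_q − F·(G·F)^{-1}·G]·U_0 + F·(G·F)^{-1}·Y_d, and G·U_∞ = Y_d. -/

import Mathlib

open Matrix Filter

open scoped NNReal ENNReal

section Geom
attribute [local instance] Matrix.linftyOpNormedAddCommGroup Matrix.linftyOpNormedRing
  Matrix.linftyOpNormedAlgebra

variable {n : ℕ}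

lemma nnnorm_map_c (A : Matrix (Fin n) (Fin n) ℝ) :
    ‖A.map (algebraMap ℝ ℂ)‖₊ = ‖A‖₊ := by
  simp [Matrix.linfty_opNNNorm_def, Matrix.map_apply]

lemma map_pow_c (A : Matrix (Fin n) (Fin n) ℝ) (k : ℕ) :
    (A ^ k).map (algebraMap ℝ ℂ) = (A.map (algebraMap ℝ ℂ)) ^ k := by
  simpa [RingHom.mapMatrix_apply] using map_pow ((algebraMap ℝ ℂ).mapMatrix) A k

lemma pow_bound (A : Matrix (Fin n) (Fin n) ℝ)
    (h : spectralRadius ℂ (A.map (algebraMap ℝ ℂ)) < 1) :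
    ∃ r : ℝ≥0, r < 1 ∧ ∀ᶠ k in atTop, ‖A ^ k‖₊ ≤ r ^ k := by
  obtain ⟨r, hr1, hr2⟩ := ENNReal.lt_iff_exists_nnreal_btwn.mp h
  refine ⟨r, by exact_mod_cast hr2, ?_⟩
  have hG := spectrum.pow_nnnorm_pow_one_div_tendsto_nhds_spectralRadius
    (A.map (algebraMap ℝ ℂ))
  have hev : ∀ᶠ k : ℕ in atTop,
      (‖(A.map (algebraMap ℝ ℂ)) ^ k‖₊ : ℝ≥0∞) ^ (1 / (k : ℝ)) < r :=
    hG.eventually_lt_const hr1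
  filter_upwards [hev, eventually_ge_atTop 1] with k hk hk1
  have hk0 : (k : ℝ) ≠ 0 := by positivity
  have : (‖(A.map (algebraMap ℝ ℂ)) ^ k‖₊ : ℝ≥0∞) ≤ (r : ℝ≥0∞) ^ (k : ℝ) := by
    calc (‖(A.map (algebraMap ℝ ℂ)) ^ k‖₊ : ℝ≥0∞)
        = ((‖(A.map (algebraMap ℝ ℂ)) ^ k‖₊ : ℝ≥0∞) ^ (1 / (k : ℝ))) ^ (k : ℝ) := by
          rw [← ENNReal.rpow_mul, one_div, inv_mul_cancel₀ hk0, ENNReal.rpow_one]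
      _ ≤ (r : ℝ≥0∞) ^ (k : ℝ) :=
          ENNReal.rpow_le_rpow hk.le (by positivity)
  rw [← map_pow_c, nnnorm_map_c] at this
  rw [ENNReal.rpow_natCast] at this
  exact_mod_cast this

lemma geom_limit (A : Matrix (Fin n) (Fin n) ℝ)
    (h : spectralRadius ℂ (A.map (algebraMap ℝ ℂ)) < 1) :
    ∃ S : Matrix (Fin n) (Fin n) ℝ, (1 - A) * S = 1 ∧ S * (1 - A) = 1 ∧
      Tendsto (fun k => ∑ j ∈ Finset.range k, A ^ j) atTop (nhds S) := by
  obtain ⟨r, hr1, hr2⟩ := pow_bound A h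
  have hrR : (r : ℝ) < 1 := hr1
  have hsum : Summable (fun k => A ^ k) := by
    refine Summable.of_norm_bounded_eventually (g := fun k => (r : ℝ) ^ k)
      (summable_geometric_of_lt_one r.coe_nonneg hrR) ?_
    rw [Nat.cofinite_eq_atTop]
    filter_upwards [hr2] with k hk
    exact_mod_cast hk
  obtain ⟨S, hS⟩ := hsum
  have hpart : Tendsto (fun k => ∑ j ∈ Finset.range k, A ^ j) atTop (nhds S) :=
    hS.tendsto_sum_nat
  have hpow0 : Tendsto (fun k => A ^ k) atTop (nhds 0) := by
    refine squeeze_zero_norm' ?_ (tendsto_pow_atTop_nhds_zero_of_lt_one r.coe_nonneg hrR)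
    filter_upwards [hr2] with k hk
    exact_mod_cast hk
  refine ⟨S, ?_, ?_, hpart⟩
  · have h1 : Tendsto (fun k => (1 - A) * ∑ j ∈ Finset.range k, A ^ j) atTop
        (nhds ((1 - A) * S)) := tendsto_const_nhds.mul hpart
    have h2 : Tendsto (fun k => (1 - A) * ∑ j ∈ Finset.range k, A ^ j) atTop (nhds 1) := by
      have : (fun k => (1 - A) * ∑ j ∈ Finset.range k, A ^ j)
          = fun k => 1 - A ^ k := by
        funext k
        have := mul_geom_sum A k
        have h' : (1 - A) * ∑ j ∈ Finset.range k, A ^ j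
            = -((A - 1) * ∑ j ∈ Finset.range k, A ^ j) := by
          rw [← neg_sub A 1, neg_mul]
        rw [h', this, neg_sub]
      rw [this]
      simpa using (tendsto_const_nhds (x := (1 : Matrix (Fin n) (Fin n) ℝ))).sub hpow0
    exact tendsto_nhds_unique h1 h2
  · have h1 : Tendsto (fun k => (∑ j ∈ Finset.range k, A ^ j) * (1 - A)) atTop
        (nhds (S * (1 - A))) := hpart.mul tendsto_const_nhds
    have h2 : Tendsto (fun k => (∑ j ∈ Finset.range k, A ^ j) * (1 - A)) atTop (nhds 1) := by
      have : (fun k => (∑ j ∈ Finset.range k, A ^ j) * (1 - A))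
          = fun k => 1 - A ^ k := by
        funext k
        have := geom_sum_mul A k
        have h' : (∑ j ∈ Finset.range k, A ^ j) * (1 - A)
            = -((∑ j ∈ Finset.range k, A ^ j) * (A - 1)) := by
          rw [← neg_sub A 1, mul_neg]
        rw [h', this, neg_sub]
      rw [this]
      simpa using (tendsto_const_nhds (x := (1 : Matrix (Fin n) (Fin n) ℝ))).sub hpow0
    exact tendsto_nhds_unique h1 h2

end Geom

/-- Spectral radius of a real square matrix via its complexification. -/
noncomputable def specRad {n : ℕ} (A : Matrix (Fin n) (Fin n) ℝ) : ENNReal :=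
  spectralRadius ℂ (A.map (algebraMap ℝ ℂ))

/-- For `G` of full row rank and `ρ(I_p − G·F) < 1`, the iteration
`U_{k+1} = (I_q − F·G)·U_k + F·Y_d` converges to
`U_∞ = [I_q − F·(G·F)⁻¹·G]·U_0 + F·(G·F)⁻¹·Y_d`, which satisfies `G·U_∞ = Y_d`. -/
theorem stmt9 {p q : ℕ} (G : Matrix (Fin p) (Fin q) ℝ) (F : Matrix (Fin q) (Fin p) ℝ)
    (Yd : Fin p → ℝ) (hrank : G.rank = p) (hρ : specRad (1 - G * F) < 1)
    (U : ℕ → Fin q → ℝ)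
    (hU : ∀ k, U (k + 1) = (1 - F * G).mulVec (U k) + F.mulVec Yd) :
    Tendsto U atTop
        (nhds ((1 - F * (G * F)⁻¹ * G).mulVec (U 0) + (F * (G * F)⁻¹).mulVec Yd)) ∧
      G.mulVec ((1 - F * (G * F)⁻¹ * G).mulVec (U 0) + (F * (G * F)⁻¹).mulVec Yd) = Yd := by
  set B : Matrix (Fin p) (Fin p) ℝ := 1 - G * F with hB
  obtain ⟨S, hS1, hS2, hSt⟩ := geom_limit B (by simpa [specRad] using hρ)
  have hBs : (1 : Matrix (Fin p) (Fin p) ℝ) - B = G * F := sub_sub_cancel 1 (G * F)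
  rw [hBs] at hS1 hS2
  have hinv : (G * F)⁻¹ = S := Matrix.inv_eq_right_inv hS1
  -- closed form for the iterates
  have hcf : ∀ k, U k = (1 - F * (∑ j ∈ Finset.range k, B ^ j) * G).mulVec (U 0)
      + (F * (∑ j ∈ Finset.range k, B ^ j)).mulVec Yd := by
    intro k
    induction k with
    | zero => simp
    | succ k ih =>
      rw [hU k, ih, geom_sum_succ]
      set T := ∑ j ∈ Finset.range k, B ^ j with hT
      have e1 : (1 - F * G) * (1 - F * T * G) = 1 - F * (B * T + 1) * G := by
        simp only [hB]
        simp only [Matrix.mul_sub, Matrix.sub_mul, Matrix.mul_add, Matrix.add_mul,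
          Matrix.mul_one, Matrix.one_mul, Matrix.mul_assoc]
        try abel
      have e2 : (1 - F * G) * (F * T) + F = F * (B * T + 1) := by
        simp only [hB]
        simp only [Matrix.mul_sub, Matrix.sub_mul, Matrix.mul_add, Matrix.add_mul,
          Matrix.mul_one, Matrix.one_mul, Matrix.mul_assoc]
        try abel
      rw [Matrix.mulVec_add, Matrix.mulVec_mulVec, Matrix.mulVec_mulVec, add_assoc,
        ← Matrix.add_mulVec, e1, e2]
  -- continuity of the map sending S to the candidate limit
  have hcont : Continuous (fun M : Matrix (Fin p) (Fin p) ℝ =>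
      (1 - F * M * G).mulVec (U 0) + (F * M).mulVec Yd) := by
    refine Continuous.add ?_ ?_
    · exact (continuous_const.sub
        (((continuous_const.matrix_mul continuous_id).matrix_mul
          continuous_const))).matrix_mulVec continuous_const
    · exact (continuous_const.matrix_mul continuous_id).matrix_mulVec continuous_const
  constructor
  · rw [hinv]
    exact Filter.Tendsto.congr (fun k => (hcf k).symm) ((hcont.tendsto S).comp hSt)
  · rw [hinv]
    have h0 : G * (1 - F * S * G) = 0 := by
      rw [Matrix.mul_sub, Matrix.mul_one, ← Matrix.mul_assoc, ← Matrix.mul_assoc, hS1,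
        Matrix.one_mul, sub_self]
    have h1 : G * (F * S) = 1 := by rw [← Matrix.mul_assoc]; exact hS1
    rw [Matrix.mulVec_add, Matrix.mulVec_mulVec, Matrix.mulVec_mulVec, h0, h1]
    simp
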